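/- Vertical cone invariance and contraction in the repelling sectors: Let q ≥ 1 be an integer, λ, μ ∈ ℂ with |λ| = 1, and constants m, M, N, M₁ ≥ 0 with N ≤ 1/3. Let x, x₁ ∈ ℂ with |x| < 1 and |x₁| ≤ M₁·|x|, and suppose A₁ := |1 + (q+1)x^q| − (m + M₁^{2q}·N)·|x|^{2q} ≥ 2/3 and A₂ := M₁^{2q}·(|μ| + N) + M·|x|² ≤ 1/3. Suppose G_x, G_y, P_x, P_y ∈ ℂ satisfy |G_x| ≤ m|x|^{2q}, |G_y| ≤ M|x|^{2q+2}, |P_x| ≤ N, |P_y| ≤ N. Let (ξ, η) ∈ ℂ² with (ξ, η) ≠ (0, 0), and set ξ' = λ(1 + (q+1)x^q + G_x)·ξ + λ·G_y·η and η' = P_x·ξ + (μ + P_y)·η. If |ξ'| < |x₁|^{2q}·|η'|, then |ξ| < |x|^{2q}·|η| and |η'| ≤ (|μ| + (3/2)N)·|η|. -/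

import Mathlib

open Metric Filter Topology Set

noncomputable section

/-- **Vertical cone invariance and contraction in the repelling sectors.** If the image
`(ξ', η')` of a nonzero tangent vector `(ξ, η)` under the derivative of the normal-form
semi-parabolic Hénon map lies in the vertical cone `{|ξ'| < |x₁|^{2q}|η'|}` at the image point,
then `(ξ, η)` lies in the vertical cone at `(x, y)` and `|η'| ≤ (|μ| + (3/2)N)|η|`. -/
theorem vertical_cone_contraction (q : ℕ) (hq : 1 ≤ q) (lam mu : ℂ)
    (hlam : ‖lam‖ = 1) (m M N M₁ : ℝ)
    (hm : 0 ≤ m) (hM : 0 ≤ M) (hN0 : 0 ≤ N) (hM₁ : 0 ≤ M₁) (hN : N ≤ 1 / 3)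
    (x x₁ : ℂ) (hx : ‖x‖ < 1) (hx₁ : ‖x₁‖ ≤ M₁ * ‖x‖)
    (hA₁ : 2 / 3 ≤ ‖1 + ((q : ℂ) + 1) * x ^ q‖ -
      (m + M₁ ^ (2 * q) * N) * ‖x‖ ^ (2 * q))
    (hA₂ : M₁ ^ (2 * q) * (‖mu‖ + N) + M * ‖x‖ ^ 2 ≤ 1 / 3)
    (Gx Gy Px Py : ℂ)
    (hGx : ‖Gx‖ ≤ m * ‖x‖ ^ (2 * q))
    (hGy : ‖Gy‖ ≤ M * ‖x‖ ^ (2 * q + 2))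
    (hPx : ‖Px‖ ≤ N) (hPy : ‖Py‖ ≤ N)
    (ξ η : ℂ) (hne : (ξ, η) ≠ (0, 0))
    (hcone : ‖lam * (1 + ((q : ℂ) + 1) * x ^ q + Gx) * ξ + lam * Gy * η‖ <
      ‖x₁‖ ^ (2 * q) * ‖Px * ξ + (mu + Py) * η‖) :
    ‖ξ‖ < ‖x‖ ^ (2 * q) * ‖η‖ ∧
    ‖Px * ξ + (mu + Py) * η‖ ≤ (‖mu‖ + 3 / 2 * N) * ‖η‖ := by
  set a := ‖x‖ with ha
  set B : ℂ := 1 + ((q : ℂ) + 1) * x ^ q with hB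
  set ξa := ‖ξ‖ with hξa
  set ηa := ‖η‖ with hηa
  set K := a ^ (2 * q) with hKdef
  set c := M₁ ^ (2 * q) with hcdef
  set b := ‖B‖ with hbdef
  set μa := ‖mu‖ with hμa
  have ha0 : 0 ≤ a := norm_nonneg x
  have hξa0 : 0 ≤ ξa := norm_nonneg ξ
  have hηa0 : 0 ≤ ηa := norm_nonneg η
  have hμa0 : 0 ≤ μa := norm_nonneg mu
  have hK0 : 0 ≤ K := pow_nonneg ha0 _
  have hK1 : K ≤ 1 := pow_le_one₀ ha0 hx.le
  have hc0 : 0 ≤ c := pow_nonneg hM₁ _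
  have ha20 : 0 ≤ a ^ 2 := sq_nonneg a
  -- lower bound for |B + Gx|
  have hBGx : b - ‖Gx‖ ≤ ‖B + Gx‖ := by
    have h := norm_add_le (B + Gx) (-Gx)
    rw [show (B + Gx) + (-Gx) = B by ring, norm_neg] at h
    linarith
  -- lower bound for |ξ'|
  have h1 : ‖B + Gx‖ * ξa - ‖Gy‖ * ηa ≤
      ‖lam * (B + Gx) * ξ + lam * Gy * η‖ := by
    have h := norm_add_le (lam * (B + Gx) * ξ + lam * Gy * η) (-(lam * Gy * η))
    rw [show (lam * (B + Gx) * ξ + lam * Gy * η) + (-(lam * Gy * η)) = lam * (B + Gx) * ξ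
      by ring, norm_neg, norm_mul, norm_mul, norm_mul, norm_mul, hlam, one_mul,
      one_mul] at h
    linarith
  -- upper bound for |η'|
  have h2 : ‖Px * ξ + (mu + Py) * η‖ ≤ N * ξa + (μa + N) * ηa := by
    calc ‖Px * ξ + (mu + Py) * η‖
        ≤ ‖Px * ξ‖ + ‖(mu + Py) * η‖ := norm_add_le _ _
      _ = ‖Px‖ * ξa + ‖mu + Py‖ * ηa := by rw [norm_mul, norm_mul]
      _ ≤ N * ξa + (μa + N) * ηa := by
          have h3 : ‖mu + Py‖ ≤ μa + N :=
            (norm_add_le mu Py).trans (by linarith)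
          gcongr
  -- bound |x₁|^{2q}
  have hx1pow : ‖x₁‖ ^ (2 * q) ≤ c * K := by
    calc ‖x₁‖ ^ (2 * q) ≤ (M₁ * a) ^ (2 * q) :=
          pow_le_pow_left₀ (norm_nonneg x₁) hx₁ _
      _ = c * K := mul_pow _ _ _
  have hη'0 : 0 ≤ ‖Px * ξ + (mu + Py) * η‖ := norm_nonneg _
  have hGy' : ‖Gy‖ ≤ M * a ^ 2 * K := by
    calc ‖Gy‖ ≤ M * a ^ (2 * q + 2) := hGy
      _ = M * a ^ 2 * K := by rw [hKdef]; ring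
  -- the key combined inequality
  have key : (b - m * K) * ξa - M * a ^ 2 * K * ηa < c * K * (N * ξa + (μa + N) * ηa) := by
    have hrhs : ‖x₁‖ ^ (2 * q) * ‖Px * ξ + (mu + Py) * η‖ ≤
        c * K * (N * ξa + (μa + N) * ηa) := by
      have hterm : 0 ≤ N * ξa + (μa + N) * ηa := by positivity
      have hcK : 0 ≤ c * K := mul_nonneg hc0 hK0
      calc ‖x₁‖ ^ (2 * q) * ‖Px * ξ + (mu + Py) * η‖
          ≤ c * K * ‖Px * ξ + (mu + Py) * η‖ := by gcongr
        _ ≤ c * K * (N * ξa + (μa + N) * ηa) := by gcongr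
    have hlhs : (b - m * K) * ξa - M * a ^ 2 * K * ηa ≤
        ‖lam * (B + Gx) * ξ + lam * Gy * η‖ := by
      have e1 := mul_le_mul_of_nonneg_right hGx hξa0
      have e2 := mul_le_mul_of_nonneg_right hGy' hηa0
      have e3 := mul_le_mul_of_nonneg_right hBGx hξa0
      have e4 : (b - ‖Gx‖) * ξa = b * ξa - ‖Gx‖ * ξa := by ring
      linarith [h1]
    linarith
  -- deduce ξa < (1/2) * K * ηa
  have hKη : 0 ≤ K * ηa := mul_nonneg hK0 hηa0
  have half : ξa < 1 / 2 * (K * ηa) := by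
    have h5 : (2 / 3 : ℝ) * ξa < 1 / 3 * (K * ηa) := by
      have f1 := mul_le_mul_of_nonneg_right hA₁ hξa0
      have f2 := mul_le_mul_of_nonneg_right hA₂ hKη
      linarith [key]
    linarith
  have hKη0 : 0 < K * ηa := by linarith
  constructor
  · linarith
  · have h6 : N * ξa ≤ 1 / 2 * N * ηa := by
      have h7 : N * ξa ≤ N * (1 / 2 * (K * ηa)) := mul_le_mul_of_nonneg_left half.le hN0
      have h8 : K * ηa ≤ ηa := by
        have := mul_le_mul_of_nonneg_right hK1 hηa0
        linarith
      have h9 : N * (K * ηa) ≤ N * ηa := mul_le_mul_of_nonneg_left h8 hN0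
      linarith
    calc ‖Px * ξ + (mu + Py) * η‖ ≤ N * ξa + (μa + N) * ηa := h2
      _ ≤ (μa + 3 / 2 * N) * ηa := by linarith [h6]
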